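/- The closed unit ball of the operator norm on matrices over ℂ of size n×n is the convex hull of the unitary group U(n). -/

import Mathlib

open Matrix
open scoped Matrix.Norms.L2Operator

section RussoDyeAux

open Complex
open scoped ComplexOrder

private lemma rd_norm_one_le {n : ℕ} : ‖(1 : Matrix (Fin n) (Fin n) ℂ)‖ ≤ 1 := by
  rw [Matrix.cstar_norm_def, _root_.map_one]
  exact ContinuousLinearMap.norm_id_le

private lemma rd_unitary_norm_le {n : ℕ} {U : Matrix (Fin n) (Fin n) ℂ}
    (hU : U ∈ Matrix.unitaryGroup (Fin n) ℂ) : ‖U‖ ≤ 1 := by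
  have h := CStarRing.norm_star_mul_self (x := U)
  rw [(Matrix.mem_unitaryGroup_iff').mp hU] at h
  nlinarith [norm_nonneg U, rd_norm_one_le (n := n)]

private lemma rd_diag_unitary {n : ℕ} (f : Fin n → ℂ) (hf : ∀ i, f i * star (f i) = 1) :
    Matrix.diagonal f ∈ Matrix.unitaryGroup (Fin n) ℂ := by
  rw [Matrix.mem_unitaryGroup_iff]
  rw [Matrix.star_eq_conjTranspose, Matrix.diagonal_conjTranspose, Matrix.diagonal_mul_diagonal]
  rw [← Matrix.diagonal_one]
  exact congrArg Matrix.diagonal (funext fun i => hf i)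

private lemma rd_herm_avg {n : ℕ} (P : Matrix (Fin n) (Fin n) ℂ) (hP : P.IsHermitian)
    (hev : ∀ i, |hP.eigenvalues i| ≤ 1) :
    ∃ W ∈ Matrix.unitaryGroup (Fin n) ℂ,
      P = (2⁻¹ : ℝ) • W + (2⁻¹ : ℝ) • star W := by
  classical
  set U : Matrix (Fin n) (Fin n) ℂ := (hP.eigenvectorUnitary : Matrix (Fin n) (Fin n) ℂ) with hU
  set f : Fin n → ℂ :=
    fun i => (hP.eigenvalues i : ℂ) + (Real.sqrt (1 - hP.eigenvalues i ^ 2) : ℝ) * I with hfdef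
  have hf : ∀ i, f i * star (f i) = 1 := by
    intro i
    have h2 : (hP.eigenvalues i) ^ 2 ≤ 1 := by
      have := hev i
      nlinarith [le_abs_self (hP.eigenvalues i), neg_abs_le (hP.eigenvalues i)]
    have hs : Real.sqrt (1 - hP.eigenvalues i ^ 2) ^ 2 = 1 - hP.eigenvalues i ^ 2 :=
      Real.sq_sqrt (by linarith)
    have h3 : f i * star (f i) = ((Complex.normSq (f i) : ℝ) : ℂ) := by
      rw [RCLike.star_def, Complex.mul_conj]
    rw [h3, hfdef]
    simp only []
    rw [Complex.normSq_add_mul_I, hs]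
    norm_num
  refine ⟨U * Matrix.diagonal f * star U, ?_, ?_⟩
  · exact mul_mem (mul_mem hP.eigenvectorUnitary.2 (rd_diag_unitary f hf))
      (Unitary.star_mem hP.eigenvectorUnitary.2)
  · have hWH : star (U * Matrix.diagonal f * star U) = U * Matrix.diagonal (star f) * star U := by
      simp only [Matrix.star_eq_conjTranspose, Matrix.conjTranspose_mul,
        Matrix.diagonal_conjTranspose, Matrix.conjTranspose_conjTranspose, mul_assoc]
    rw [hWH]
    have hd : Matrix.diagonal ((↑) ∘ hP.eigenvalues : Fin n → ℂ)
        = (2⁻¹ : ℝ) • Matrix.diagonal f + (2⁻¹ : ℝ) • Matrix.diagonal (star f) := by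
      ext i j
      rcases eq_or_ne i j with h | h
      · subst h
        simp only [Matrix.add_apply, Matrix.smul_apply, Matrix.diagonal_apply_eq,
          Function.comp_apply, Pi.star_apply, hfdef]
        simp only [star_add, star_mul', RCLike.star_def, conj_ofReal, conj_I, Complex.real_smul]
        push_cast
        ring
      · simp [Matrix.diagonal_apply_ne _ h, h]
    calc P = U * Matrix.diagonal ((↑) ∘ hP.eigenvalues) * star U := hP.spectral_theorem
      _ = (2⁻¹ : ℝ) • (U * Matrix.diagonal f * star U)
          + (2⁻¹ : ℝ) • (U * Matrix.diagonal (star f) * star U) := by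
        rw [hd, Matrix.mul_add, Matrix.add_mul, Matrix.mul_smul, Matrix.mul_smul,
          Matrix.smul_mul, Matrix.smul_mul]

private lemma rd_ev_bound {n : ℕ} [Nonempty (Fin n)] (P : Matrix (Fin n) (Fin n) ℂ)
    (hP : P.IsHermitian) (hnorm : ‖P‖ ≤ 1) (i : Fin n) : |hP.eigenvalues i| ≤ 1 := by
  haveI : NormOneClass (Matrix (Fin n) (Fin n) ℂ) := by
    constructor
    rw [Matrix.cstar_norm_def, _root_.map_one]
    exact ContinuousLinearMap.norm_id
  have h1 : hP.eigenvalues i ∈ spectrum ℝ P := hP.eigenvalues_mem_spectrum_real i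
  have h2 : ((hP.eigenvalues i : ℝ) : ℂ) ∈ spectrum ℂ P := spectrum.algebraMap_mem ℂ h1
  have h3 := spectrum.norm_le_norm_of_mem h2
  rw [Complex.norm_real] at h3
  calc |hP.eigenvalues i| = ‖hP.eigenvalues i‖ := (Real.norm_eq_abs _).symm
    _ ≤ ‖P‖ := h3
    _ ≤ 1 := hnorm

open scoped MatrixOrder in
private lemma rd_inv_case {n : ℕ} [Nonempty (Fin n)] (K : Matrix (Fin n) (Fin n) ℂ)
    (hK : ‖K‖ ≤ 1) (hdet : IsUnit K.det) :
    ∃ U₁ ∈ Matrix.unitaryGroup (Fin n) ℂ, ∃ U₂ ∈ Matrix.unitaryGroup (Fin n) ℂ,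
      K = (2⁻¹ : ℝ) • U₁ + (2⁻¹ : ℝ) • U₂ := by
  have hPSD := Matrix.posSemidef_conjTranspose_mul_self K
  set P : Matrix (Fin n) (Fin n) ℂ := CFC.sqrt (Kᴴ * K) with hPdef
  have hPsd : P.PosSemidef := (CFC.sqrt_nonneg (Kᴴ * K)).posSemidef
  have hPH : P.IsHermitian := hPsd.1
  have hPP : P * P = Kᴴ * K := CFC.sqrt_mul_sqrt_self _ hPSD.nonneg
  have hdetP : IsUnit P.det := by
    have h1 : P.det * P.det = Kᴴ.det * K.det := by
      rw [← Matrix.det_mul, ← Matrix.det_mul, hPP]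
    have h2 : IsUnit (P.det * P.det) := by
      rw [h1, Matrix.det_conjTranspose]
      exact hdet.star.mul hdet
    exact isUnit_of_mul_isUnit_left h2
  have hPnorm : ‖P‖ ≤ 1 := by
    have h1 := CStarRing.norm_star_mul_self (x := P)
    have h2 := CStarRing.norm_star_mul_self (x := K)
    rw [Matrix.star_eq_conjTranspose, hPH.eq, hPP] at h1
    rw [Matrix.star_eq_conjTranspose] at h2
    rw [h2] at h1
    nlinarith [norm_nonneg P, norm_nonneg K]
  set V : Matrix (Fin n) (Fin n) ℂ := K * P⁻¹ with hVdef
  have hPinvH : P⁻¹ᴴ = P⁻¹ := by rw [Matrix.conjTranspose_nonsing_inv, hPH.eq]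
  have hVmem : V ∈ Matrix.unitaryGroup (Fin n) ℂ := by
    rw [Matrix.mem_unitaryGroup_iff']
    rw [Matrix.star_eq_conjTranspose, hVdef, Matrix.conjTranspose_mul, hPinvH]
    calc P⁻¹ * Kᴴ * (K * P⁻¹) = P⁻¹ * (Kᴴ * K) * P⁻¹ := by simp only [mul_assoc]
      _ = P⁻¹ * (P * P) * P⁻¹ := by rw [hPP]
      _ = (P⁻¹ * P) * (P * P⁻¹) := by simp only [mul_assoc]
      _ = 1 := by rw [Matrix.nonsing_inv_mul P hdetP, Matrix.mul_nonsing_inv P hdetP, one_mul]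
  have hKVP : K = V * P := by
    rw [hVdef]
    exact (Matrix.nonsing_inv_mul_cancel_right P K hdetP).symm
  obtain ⟨W, hWmem, hPeq⟩ := rd_herm_avg P hPH (rd_ev_bound P hPH hPnorm)
  refine ⟨V * W, mul_mem hVmem hWmem, V * star W,
    mul_mem hVmem (Unitary.star_mem hWmem), ?_⟩
  rw [hKVP, hPeq, Matrix.mul_add, Matrix.mul_smul, Matrix.mul_smul]

private lemma rd_unitary_compact {n : ℕ} :
    IsCompact (Matrix.unitaryGroup (Fin n) ℂ : Set (Matrix (Fin n) (Fin n) ℂ)) := by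
  have hclosed : IsClosed (Matrix.unitaryGroup (Fin n) ℂ : Set (Matrix (Fin n) (Fin n) ℂ)) := by
    have heq : (Matrix.unitaryGroup (Fin n) ℂ : Set (Matrix (Fin n) (Fin n) ℂ))
        = (fun U => U * star U) ⁻¹' {1} := by
      ext U
      simp [Matrix.mem_unitaryGroup_iff]
    rw [heq]
    exact IsClosed.preimage (continuous_id.mul continuous_star) isClosed_singleton
  have hbdd : Bornology.IsBounded
      (Matrix.unitaryGroup (Fin n) ℂ : Set (Matrix (Fin n) (Fin n) ℂ)) := by
    apply (Metric.isBounded_closedBall (x := (0 : Matrix (Fin n) (Fin n) ℂ)) (r := 1)).subset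
    intro U hU
    rw [Metric.mem_closedBall, dist_zero_right]
    exact rd_unitary_norm_le hU
  exact Metric.isCompact_of_isClosed_isBounded hclosed hbdd

private lemma rd_dense {n : ℕ} (K : Matrix (Fin n) (Fin n) ℂ) (hK : ‖K‖ ≤ 1) {ε : ℝ}
    (hε : 0 < ε) :
    ∃ K' : Matrix (Fin n) (Fin n) ℂ, IsUnit K'.det ∧ ‖K'‖ ≤ 1 ∧ dist K K' < ε := by
  set t : ℝ := min (ε / 3) 2⁻¹ with ht
  have ht0 : 0 < t := lt_min (by linarith) (by norm_num)
  have ht1 : t ≤ 2⁻¹ := min_le_right _ _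
  have htε : t ≤ ε / 3 := min_le_left _ _
  set A : Matrix (Fin n) (Fin n) ℂ := (((1 - t : ℝ)) : ℂ) • K with hA
  have hbad : {r : ℝ | -(r : ℂ) ∈ spectrum ℂ A}.Finite := by
    have heq : {r : ℝ | -(r : ℂ) ∈ spectrum ℂ A}
        = (fun r : ℝ => -(r : ℂ)) ⁻¹' (spectrum ℂ A) := rfl
    rw [heq]
    apply Set.Finite.preimage _ (Matrix.finite_spectrum A)
    intro a _ b _ hab
    simpa using hab
  obtain ⟨δ, hδ⟩ := ((Set.Ioo_infinite ht0).diff hbad).nonempty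
  obtain ⟨⟨hδ0, hδt⟩, hδbad⟩ := hδ
  set K' : Matrix (Fin n) (Fin n) ℂ := A + ((δ : ℝ) : ℂ) • 1 with hK'
  have hunit : IsUnit K' := by
    have h1 : IsUnit (algebraMap ℂ (Matrix (Fin n) (Fin n) ℂ) (-(δ:ℂ)) - A) :=
      spectrum.notMem_iff.mp hδbad
    rw [Algebra.algebraMap_eq_smul_one] at h1
    have h2 : (-(δ:ℂ)) • (1 : Matrix (Fin n) (Fin n) ℂ) - A = -K' := by
      rw [hK', neg_smul]; abel
    rw [h2] at h1
    simpa using h1.neg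
  refine ⟨K', (Matrix.isUnit_iff_isUnit_det K').mp hunit, ?_, ?_⟩
  · calc ‖K'‖ ≤ ‖A‖ + ‖((δ : ℝ) : ℂ) • (1 : Matrix (Fin n) (Fin n) ℂ)‖ := norm_add_le _ _
      _ ≤ (1 - t) * ‖K‖ + δ * ‖(1 : Matrix (Fin n) (Fin n) ℂ)‖ := by
        rw [hA, norm_smul, norm_smul]
        simp only [Complex.norm_real, Real.norm_eq_abs]
        have h1t : (0:ℝ) ≤ 1 - t := by linarith
        rw [_root_.abs_of_nonneg h1t, _root_.abs_of_nonneg hδ0.le]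
      _ ≤ (1 - t) * 1 + δ * 1 := by
        apply add_le_add
        · exact mul_le_mul_of_nonneg_left hK (by linarith)
        · exact mul_le_mul_of_nonneg_left rd_norm_one_le hδ0.le
      _ ≤ 1 := by linarith
  · rw [dist_eq_norm]
    have hsub : K - K' = ((t : ℝ) : ℂ) • K - ((δ : ℝ) : ℂ) • 1 := by
      rw [hK', hA]
      push_cast
      ring_nf
      module
    rw [hsub]
    calc ‖((t : ℝ) : ℂ) • K - ((δ : ℝ) : ℂ) • (1 : Matrix (Fin n) (Fin n) ℂ)‖
        ≤ ‖((t : ℝ) : ℂ) • K‖ + ‖((δ : ℝ) : ℂ) • (1 : Matrix (Fin n) (Fin n) ℂ)‖ :=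
          norm_sub_le _ _
      _ ≤ t * ‖K‖ + δ * ‖(1 : Matrix (Fin n) (Fin n) ℂ)‖ := by
        rw [norm_smul, norm_smul]
        simp only [Complex.norm_real, Real.norm_eq_abs]
        rw [_root_.abs_of_nonneg ht0.le, _root_.abs_of_nonneg hδ0.le]
      _ ≤ t * 1 + δ * 1 := by
        apply add_le_add
        · exact mul_le_mul_of_nonneg_left hK ht0.le
        · exact mul_le_mul_of_nonneg_left rd_norm_one_le hδ0.le
      _ < ε := by linarith

end RussoDyeAux

/-- Finite-dimensional Russo–Dye: the operator-norm unit ball is the convex hull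
of the unitary group. -/
theorem stmt5 {n : ℕ} :
    {K : Matrix (Fin n) (Fin n) ℂ | ‖K‖ ≤ 1} =
      convexHull ℝ (Matrix.unitaryGroup (Fin n) ℂ : Set (Matrix (Fin n) (Fin n) ℂ)) := by
  apply Set.Subset.antisymm
  · rcases Nat.eq_zero_or_pos n with hn | hn
    · subst hn
      intro K _
      haveI : Subsingleton (Matrix (Fin 0) (Fin 0) ℂ) := by
        constructor
        intro a b
        ext i j
        exact i.elim0
      have hK1 : K = 1 := Subsingleton.elim _ _
      rw [hK1]
      exact subset_convexHull ℝ _ (one_mem (Matrix.unitaryGroup (Fin 0) ℂ))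
    · haveI : Nonempty (Fin n) := ⟨⟨0, hn⟩⟩
      set s : Set (Matrix (Fin n) (Fin n) ℂ) :=
        (Matrix.unitaryGroup (Fin n) ℂ : Set (Matrix (Fin n) (Fin n) ℂ)) with hs
      set M : Set (Matrix (Fin n) (Fin n) ℂ) :=
        (fun p : Matrix (Fin n) (Fin n) ℂ × Matrix (Fin n) (Fin n) ℂ =>
          (2⁻¹ : ℝ) • p.1 + (2⁻¹ : ℝ) • p.2) '' (s ×ˢ s) with hM
      have hMc : IsCompact M :=
        (rd_unitary_compact.prod rd_unitary_compact).image
          (by fun_prop)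
      intro K hK
      have hKM : K ∈ M := by
        rw [← hMc.isClosed.closure_eq]
        rw [Metric.mem_closure_iff]
        intro ε hε
        obtain ⟨K', hdet, hnorm, hdist⟩ := rd_dense K hK hε
        obtain ⟨U₁, hU₁, U₂, hU₂, hKeq⟩ := rd_inv_case K' hnorm hdet
        exact ⟨K', ⟨(U₁, U₂), ⟨hU₁, hU₂⟩, hKeq.symm⟩, hdist⟩
      obtain ⟨⟨a, b⟩, ⟨ha, hb⟩, rfl⟩ := hKM
      exact (convex_convexHull ℝ s) (subset_convexHull ℝ s ha) (subset_convexHull ℝ s hb)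
        (by norm_num) (by norm_num) (by norm_num)
  · apply convexHull_min
    · intro U hU
      exact rd_unitary_norm_le hU
    · have heq : {K : Matrix (Fin n) (Fin n) ℂ | ‖K‖ ≤ 1} = Metric.closedBall 0 1 := by
        ext x
        simp [Metric.mem_closedBall, dist_zero_right]
      rw [heq]
      exact convex_closedBall 0 1
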